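/- For every k > 0, every r < k, and all nonnegative integers n_0, ..., n_{r+1} (with n_{r+1} := 0 if needed), ∂^k(n_0 + n_1 + ... + n_r) ≤ Σ_{i=0}^{r} max{n_{i+1}, ∂^{k−i}(n_i)}. -/

import Mathlib

/-- The largest `m` with `C(m, k) ≤ n` (the leading term of the greedy cascade
representation). -/
def cascadeTop (k n : ℕ) : ℕ := Nat.findGreatest (fun m => Nat.choose m k ≤ n) (n + k + 1)

/-- `delSym k n = ∂^k(n)`: for `n > 0` with `k`-cascade representation
`n = C(n_k, k) + ... + C(n_i, i)` (computed greedily), `∂^k(n) = C(n_k - 1, k - 1)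
+ ... + C(n_i - 1, i - 1)`, and `∂^k(0) = 0`. -/
def delSym : ℕ → ℕ → ℕ
  | _, 0 => 0
  | 0, _ + 1 => 1
  | k + 1, n + 1 =>
    Nat.choose (cascadeTop (k + 1) (n + 1) - 1) k +
      delSym k (n + 1 - Nat.choose (cascadeTop (k + 1) (n + 1)) (k + 1))

/-- Auxiliary for Kruskal–Katona shadow: `delKKaux k n` is
`C(n_k, k-1) + ... + C(n_i, i-1)` for the `k`-cascade representation of `n`. -/
def delKKaux : ℕ → ℕ → ℕ
  | _, 0 => 0
  | 0, _ + 1 => 1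
  | k + 1, n + 1 =>
    Nat.choose (cascadeTop (k + 1) (n + 1)) k +
      delKKaux k (n + 1 - Nat.choose (cascadeTop (k + 1) (n + 1)) (k + 1))

/-- `delKK k n = ∂_k(n)`, computed via the `(k+1)`-cascade representation of `n`. -/
def delKK (k n : ℕ) : ℕ := delKKaux (k + 1) n

lemma delSym_zero (k : ℕ) : delSym k 0 = 0 := by cases k <;> rfl

lemma delSym_zero_left (n : ℕ) (hn : 1 ≤ n) : delSym 0 n = 1 := by
  cases n with
  | zero => omega
  | succ m => rfl

lemma choose_lower (k s : ℕ) : s + 1 ≤ (k + 1 + s).choose (k + 1) := by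
  induction s with
  | zero => simp
  | succ s ih =>
      have h : (k + 1 + (s+1)) = (k + s + 1) + 1 := by omega
      rw [h]
      have h2 : ((k + s + 1) + 1).choose (k + 1) = (k + s + 1).choose k + (k + s + 1).choose (k + 1) :=
        Nat.choose_succ_succ _ _
      have hpos : 0 < (k + s + 1).choose k := Nat.choose_pos (by omega)
      have h3 : (k + 1 + s) = (k + s + 1) := by omega
      rw [h3] at ih
      omega

lemma pascal (p j : ℕ) (hp : 1 ≤ p) (hj : 1 ≤ j) :
    p.choose j = (p-1).choose (j-1) + (p-1).choose j := by
  obtain ⟨p', rfl⟩ : ∃ p', p = p' + 1 := ⟨p - 1, by omega⟩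
  obtain ⟨j', rfl⟩ : ∃ j', j = j' + 1 := ⟨j - 1, by omega⟩
  simp [Nat.choose_succ_succ]


lemma choose_symm' (n a b : ℕ) (h : a + b = n) : n.choose a = n.choose b := by
  have hb : b ≤ n := by omega
  have h2 := Nat.choose_symm hb
  rw [show n - b = a by omega] at h2
  exact h2

lemma ct_upper (k n : ℕ) (hk : 1 ≤ k) : (cascadeTop k n).choose k ≤ n := by
  have h0 : (Nat.choose 0 k ≤ n) := by
    rw [Nat.choose_eq_zero_of_lt (by omega)]; omega
  unfold cascadeTop
  exact Nat.findGreatest_spec (P := fun m => m.choose k ≤ n) (m := 0) (Nat.zero_le _) h0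

lemma ct_le (k n : ℕ) : cascadeTop k n ≤ n + k + 1 := Nat.findGreatest_le _

lemma ct_lt (k n : ℕ) (hk : 1 ≤ k) : n < (cascadeTop k n + 1).choose k := by
  by_contra h
  push_neg at h
  have hub : cascadeTop k n + 1 ≤ n + k + 1 := by
    have h1 : (cascadeTop k n).choose k ≤ n := ct_upper k n hk
    rcases Nat.lt_or_ge (cascadeTop k n) (n + k + 1) with h2 | h2
    · omega
    · exfalso
      have h3 : cascadeTop k n = n + k + 1 := le_antisymm (ct_le k n) h2
      obtain ⟨k', rfl⟩ : ∃ k', k = k' + 1 := ⟨k - 1, by omega⟩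
      have h4 := choose_lower k' (n + 1)
      have h5 : (k' + 1 + (n+1)) = n + (k'+1) + 1 := by omega
      rw [h5] at h4
      rw [h3] at h1
      omega
  exact Nat.findGreatest_is_greatest (Nat.lt_succ_self _) hub h

lemma ct_ge (k n : ℕ) (hk : 1 ≤ k) (hn : 1 ≤ n) : k ≤ cascadeTop k n := by
  unfold cascadeTop
  apply Nat.le_findGreatest (P := fun m => m.choose k ≤ n) (by omega)
  simp only [Nat.choose_self]; omega

lemma ct_eq (k q n : ℕ) (hk : 1 ≤ k) (hq : k ≤ q) (h1 : q.choose k ≤ n)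
    (h2 : n < (q+1).choose k) : cascadeTop k n = q := by
  apply le_antisymm
  · by_contra h
    push_neg at h
    have h3 : (q+1).choose k ≤ (cascadeTop k n).choose k :=
      Nat.choose_le_choose _ (by omega)
    have := ct_upper k n hk
    omega
  · unfold cascadeTop
    apply Nat.le_findGreatest (P := fun m => m.choose k ≤ n) _ h1
    obtain ⟨k', rfl⟩ : ∃ k', k = k' + 1 := ⟨k - 1, by omega⟩
    have h4 := choose_lower k' (q - (k' + 1))
    have h5 : (k' + 1 + (q - (k' + 1))) = q := by omega
    rw [h5] at h4
    omega

lemma delSym_rec (k q n : ℕ) (hk : 1 ≤ k) (hq : k ≤ q) (h1 : q.choose k ≤ n)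
    (h2 : n < (q+1).choose k) :
    delSym k n = (q-1).choose (k-1) + delSym (k-1) (n - q.choose k) := by
  have hct : cascadeTop k n = q := ct_eq k q n hk hq h1 h2
  have hn : 1 ≤ n := le_trans (Nat.choose_pos hq) h1
  obtain ⟨k', rfl⟩ : ∃ k', k = k' + 1 := ⟨k - 1, by omega⟩
  obtain ⟨n', rfl⟩ : ∃ n', n = n' + 1 := ⟨n - 1, by omega⟩
  show (cascadeTop (k'+1) (n'+1) - 1).choose k' + _ = _
  rw [hct]
  simp

lemma delSym_P (k m : ℕ) (hk : 1 ≤ k) (hm : k ≤ m) :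
    delSym k (m.choose k) = (m-1).choose (k-1) := by
  have h2 : m.choose k < (m+1).choose k := by
    rw [pascal (m+1) k (by omega) hk]
    have : 0 < m.choose (k-1) := Nat.choose_pos (by omega)
    simp only [Nat.add_sub_cancel]
    omega
  rw [delSym_rec k m (m.choose k) hk hm le_rfl h2]
  simp [delSym_zero]

lemma delSym_one (k : ℕ) : delSym k 1 = 1 := by
  cases k with
  | zero => rfl
  | succ k' =>
      have h := delSym_P (k'+1) (k'+1) (by omega) le_rfl
      simpa using h

lemma delSym_level_one (n : ℕ) (hn : 1 ≤ n) : delSym 1 n = 1 := by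
  have h := delSym_rec 1 n n (by omega) (by simpa using hn) (by simp) (by simp)
  simp at h
  rw [h, delSym_zero]

lemma delSym_succ_self (d : ℕ) (hd : 1 ≤ d) : delSym d (d+1) = d := by
  obtain ⟨e, rfl⟩ : ∃ e, d = e + 1 := ⟨d - 1, by omega⟩
  have h1 : (e+2).choose (e+1) = e+2 := Nat.choose_succ_self_right (e+1)
  have h2 : (e+2+1).choose (e+1) = (e+2).choose e + (e+2).choose (e+1) :=
    Nat.choose_succ_succ (e+2) e
  have h3 : 0 < (e+2).choose e := Nat.choose_pos (by omega)
  have hrec := delSym_rec (e+1) (e+2) (e+2) (by omega) (by omega) (by omega) (by omega)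
  rw [hrec]
  simp only [Nat.add_sub_cancel]
  rw [h1]
  simp only [Nat.sub_self, delSym_zero]
  rw [show e+2-1 = e+1 from rfl, Nat.choose_succ_self_right]

lemma delSym_pred_le (j q : ℕ) : delSym j (q.choose j - 1) ≤ (q-1).choose (j-1) := by
  induction j generalizing q with
  | zero => simp [delSym_zero]
  | succ j ih =>
      by_cases h1 : q.choose (j+1) ≤ 1
      · have h2 : q.choose (j+1) - 1 = 0 := by omega
        rw [h2, delSym_zero]; omega
      · push_neg at h1
        have hq : j + 1 < q := by
          by_contra hq
          push_neg at hq
          rcases Nat.lt_or_ge q (j+1) with h | h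
          · rw [Nat.choose_eq_zero_of_lt h] at h1; omega
          · have : q = j + 1 := by omega
            rw [this, Nat.choose_self] at h1; omega
        have hpas : q.choose (j+1) = (q-1).choose j + (q-1).choose (j+1) :=
          pascal q (j+1) (by omega) (by omega)
        have hpos : 0 < (q-1).choose j := Nat.choose_pos (by omega)
        have hQ : q - 1 + 1 = q := by omega
        have hrec := delSym_rec (j+1) (q-1) (q.choose (j+1) - 1) (by omega) (by omega)
          (by omega) (by rw [hQ]; omega)
        have harg : q.choose (j+1) - 1 - (q-1).choose (j+1) = (q-1).choose j - 1 := by omega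
        rw [harg] at hrec
        rw [hrec]
        simp only [Nat.add_sub_cancel]
        have hih := ih (q-1)
        by_cases hj0 : j = 0
        · subst hj0
          simp [delSym_zero]
        · have hpas2 : (q-1).choose j = (q-1-1).choose (j-1) + (q-1-1).choose j :=
            pascal (q-1) j (by omega) (by omega)
          omega

lemma delSym_mono_step (n : ℕ) : ∀ j, delSym j n ≤ delSym j (n + 1) := by
  induction n using Nat.strong_induction_on with
  | _ n IH =>
    intro j
    cases j with
    | zero =>
        rw [delSym_zero_left (n+1) (by omega)]
        cases n with
        | zero => simp [delSym_zero]
        | succ m => rw [delSym_zero_left _ (by omega)]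
    | succ j' =>
        set j := j' + 1 with hjdef
        cases n with
        | zero => simp [delSym_zero]
        | succ n' =>
          set n := n' + 1 with hndef
          have hj : 1 ≤ j := by omega
          have hn : 1 ≤ n := by omega
          set m := cascadeTop j n with hmdef
          have hmk : j ≤ m := ct_ge j n hj hn
          have hup : m.choose j ≤ n := ct_upper j n hj
          have hlt : n < (m+1).choose j := ct_lt j n hj
          have hrec := delSym_rec j m n hj hmk hup hlt
          by_cases hend : n + 1 < (m+1).choose j
          · have hrec2 := delSym_rec j m (n+1) hj hmk (by omega) hend
            rw [hrec, hrec2]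
            have harg : n + 1 - m.choose j = (n - m.choose j) + 1 := by omega
            rw [harg]
            have hpos : 0 < m.choose j := Nat.choose_pos hmk
            have := IH (n - m.choose j) (by omega) (j - 1)
            omega
          · have hend2 : n + 1 = (m+1).choose j := by omega
            have h1 : delSym j n ≤ (m+1-1).choose (j-1) := by
              have := delSym_pred_le j (m+1)
              have harg : (m+1).choose j - 1 = n := by omega
              rw [harg] at this
              simpa using this
            have h2 : delSym j (n+1) = (m+1-1).choose (j-1) := by
              rw [hend2]
              exact delSym_P j (m+1) hj (by omega)
            omega

lemma delSym_mono (j a b : ℕ) (h : a ≤ b) : delSym j a ≤ delSym j b := by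
  induction b with
  | zero => have : a = 0 := by omega
            simp [this]
  | succ b ih =>
      rcases Nat.lt_or_ge a (b+1) with h1 | h1
      · exact le_trans (ih (by omega)) (delSym_mono_step b j)
      · have : a = b + 1 := by omega
        rw [this]

lemma delSym_le_self (n : ℕ) : ∀ j, delSym j n ≤ n := by
  induction n using Nat.strong_induction_on with
  | _ n IH =>
    intro j
    cases j with
    | zero => cases n with
              | zero => simp [delSym_zero]
              | succ m => rw [delSym_zero_left _ (by omega)]; omega
    | succ j' =>
      cases n with
      | zero => simp [delSym_zero]
      | succ n' =>
        set j := j' + 1 with hjdef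
        set n := n' + 1 with hndef
        have hj : 1 ≤ j := by omega
        set m := cascadeTop j n with hmdef
        have hmk : j ≤ m := ct_ge j n hj (by omega)
        have hup : m.choose j ≤ n := ct_upper j n hj
        have hlt : n < (m+1).choose j := ct_lt j n hj
        rw [delSym_rec j m n hj hmk hup hlt]
        have h1 := IH (n - m.choose j) (by
          have : 0 < m.choose j := Nat.choose_pos hmk
          omega) (j-1)
        have h2 : (m-1).choose (j-1) ≤ m.choose j := by
          have := pascal m j (by omega) hj
          omega
        have : 0 < m.choose j := Nat.choose_pos hmk
        omega

lemma delSym_eq_self (j x : ℕ) (h : x ≤ j) : delSym j x = x := by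
  induction j generalizing x with
  | zero => have : x = 0 := by omega
            simp [this, delSym_zero]
  | succ j ih =>
      cases x with
      | zero => simp [delSym_zero]
      | succ x' =>
        have h1 : (j+1).choose (j+1) ≤ x' + 1 := by simp
        have h2 : x' + 1 < (j+1+1).choose (j+1) := by
          rw [Nat.choose_succ_self_right]
          omega
        have hrec := delSym_rec (j+1) (j+1) (x'+1) (by omega) le_rfl h1 h2
        rw [hrec]
        simp only [Nat.choose_self, Nat.add_sub_cancel]
        rw [ih x' (by omega)]
        omega

lemma delSym_rec_closed (k q n : ℕ) (hk : 2 ≤ k) (hq : k ≤ q) (h1 : q.choose k ≤ n)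
    (h2 : n ≤ (q+1).choose k) :
    delSym k n = (q-1).choose (k-1) + delSym (k-1) (n - q.choose k) := by
  rcases Nat.lt_or_ge n ((q+1).choose k) with h3 | h3
  · exact delSym_rec k q n (by omega) hq h1 h3
  · have hn : n = (q+1).choose k := by omega
    subst hn
    have hP1 : delSym k ((q+1).choose k) = q.choose (k-1) := by
      have := delSym_P k (q+1) (by omega) (by omega)
      simpa using this
    have hpasq : (q+1).choose k = q.choose (k-1) + q.choose k :=
      pascal (q+1) k (by omega) (by omega)
    have harg : (q+1).choose k - q.choose k = q.choose (k-1) := by omega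
    rw [hP1, harg]
    have hP2 : delSym (k-1) (q.choose (k-1)) = (q-1).choose (k-1-1) := by
      exact delSym_P (k-1) q (by omega) (by omega)
    rw [hP2]
    have hpas2 : q.choose (k-1) = (q-1).choose (k-1-1) + (q-1).choose (k-1) :=
      pascal q (k-1) (by omega) (by omega)
    omega

lemma delSym_dual : ∀ d j x : ℕ, 1 ≤ d → (1 ≤ j ∨ x = 0) → x ≤ (j+d).choose j →
    delSym j x + (j+d-1).choose j = x + delSym d ((j+d).choose j - x) := by
  intro d
  induction d with
  | zero => intro j x hd; omega
  | succ d ihd =>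
    intro j
    induction j with
    | zero =>
      intro x _ hj hx
      have hx0 : x = 0 := by rcases hj with h | h; omega; exact h
      subst hx0
      simp [delSym_zero, delSym_one]
    | succ j ihj =>
      intro x _ hj hx
      have hpdef : (j+1)+(d+1) = (j+1)+(d+1) := rfl
      set p := (j+1) + (d+1) with hp
      rcases Nat.eq_zero_or_pos x with hx0 | hxpos
      · subst hx0
        simp only [delSym_zero, Nat.zero_add, Nat.sub_zero]
        have hP : delSym (d+1) (p.choose (d+1)) = (p-1).choose (d+1-1) :=
          delSym_P (d+1) p (by omega) (by omega)
        have hsymm1 : p.choose (d+1) = p.choose (j+1) := by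
          have h : p - (d+1) = j+1 := by omega
          rw [← h, Nat.choose_symm (by omega)]
        have hsymm2 : (p-1).choose (d+1-1) = (p-1).choose (j+1) := by
          have h : (p-1) - (d+1-1) = j+1 := by omega
          rw [← h, Nat.choose_symm (by omega)]
        rw [← hsymm1, hP, hsymm2]
      rcases Nat.eq_or_lt_of_le hx with hxC | hxlt
      · rw [hxC]
        simp only [Nat.sub_self, delSym_zero]
        have hP : delSym (j+1) (p.choose (j+1)) = (p-1).choose (j+1-1) :=
          delSym_P (j+1) p (by omega) (by omega)
        rw [hP]
        have hpas : p.choose (j+1) = (p-1).choose j + (p-1).choose (j+1) :=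
          pascal p (j+1) (by omega) (by omega)
        simp only [Nat.add_sub_cancel] at *
        omega
      · have hCpos : 2 ≤ p.choose (j+1) := by omega
        rcases Nat.lt_or_ge x ((p-1).choose (j+1)) with hcase | hcase
        · -- x < C(p-1, j+1) : reduce d
          have hpas : p.choose (j+1) = (p-1).choose j + (p-1).choose (j+1) :=
            pascal p (j+1) (by omega) (by omega)
          have hw_lb : (p-1).choose (d+1) < p.choose (j+1) - x := by
            have hsymm : (p-1).choose (d+1) = (p-1).choose j := by
              have h : (p-1) - (d+1) = j := by omega
              rw [← h, Nat.choose_symm (by omega)]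
            omega
          have hsymmp : p.choose (d+1) = p.choose (j+1) := by
            have h : p - (d+1) = j+1 := by omega
            rw [← h, Nat.choose_symm (by omega)]
          cases d with
          | zero =>
            have hx_le : x ≤ j + 1 := by
              have h2 : p.choose (j+1) = j+2 := by
                rw [show p = (j+1)+1 by omega, Nat.choose_succ_self_right]
              omega
            rw [delSym_eq_self (j+1) x (by omega)]
            rw [delSym_level_one _ (by omega)]
            have h1 : (p-1).choose (j+1) = 1 := by
              rw [show p-1 = j+1 by omega, Nat.choose_self]
            have h2 : p.choose (j+1) = j+2 := by
              rw [show p = (j+1)+1 by omega, Nat.choose_succ_self_right]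
            omega
          | succ d' =>
            have hih := ihd (j+1) x (by omega) (by left; omega) (by
              have h : (j+1)+(d'+1) = p - 1 := by omega
              rw [h]; omega)
            have hQ : (j+1)+(d'+1) = p - 1 := by omega
            rw [hQ] at hih
            have hrecw := delSym_rec (d'+1+1) (p-1) (p.choose (j+1) - x) (by omega)
              (by omega) (by omega) (by
                rw [show p - 1 + 1 = p by omega]
                omega)
            have harg : p.choose (j+1) - x - (p-1).choose (d'+1+1) = (p-1).choose (j+1) - x := by
              have hsymm : (p-1).choose (d'+1+1) = (p-1).choose j := by
                have h : (p-1) - (d'+1+1) = j := by omega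
                rw [← h, Nat.choose_symm (by omega)]
              omega
            rw [harg] at hrecw
            rw [hrecw]
            simp only [Nat.add_sub_cancel] at hrecw hih ⊢
            have hsymm3 : (p-1-1).choose (d'+1) = (p-1-1).choose j := by
              have h : (p-1-1) - (d'+1) = j := by omega
              rw [← h, Nat.choose_symm (by omega)]
            have hpas3 : (p-1).choose (j+1) = (p-1-1).choose j + (p-1-1).choose (j+1) :=
              pascal (p-1) (j+1) (by omega) (by omega)
            omega
        · -- x ≥ C(p-1,j+1) : reduce j
          have hpas : p.choose (j+1) = (p-1).choose j + (p-1).choose (j+1) :=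
            pascal p (j+1) (by omega) (by omega)
          have hrecx := delSym_rec (j+1) (p-1) x (by omega) (by omega) hcase (by
            rw [show p - 1 + 1 = p by omega]; omega)
          have hih := ihj (x - (p-1).choose (j+1)) (by omega) (by
            rcases Nat.eq_zero_or_pos j with hj0 | hjpos
            · right
              subst hj0
              have h0 : (p-1).choose 0 = 1 := Nat.choose_zero_right _
              omega
            · left; omega) (by
              have h : j + (d+1) = p - 1 := by omega
              rw [h]; omega)
          have hQ : j + (d+1) = p - 1 := by omega
          rw [hQ] at hih
          have harg : (p-1).choose j - (x - (p-1).choose (j+1)) = p.choose (j+1) - x := by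
            omega
          rw [harg] at hih
          rw [hrecx]
          simp only [Nat.add_sub_cancel] at hrecx hih ⊢
          omega
lemma master : ∀ N : ℕ,
    (∀ j p x y, 1 ≤ j → x < p.choose j → y < p.choose j → p.choose j ≤ x + y → x + y ≤ N →
       (p-1).choose (j-1) + delSym j (x + y - p.choose j) ≤ delSym j x + delSym j y) ∧
    (∀ j x y, x + y ≤ N → delSym j (x + y) ≤ delSym j x + delSym j y) ∧
    (∀ k t, 1 ≤ k → t.choose (k+1) ≤ N → delSym k (t.choose (k+1)) ≤ (t-1).choose k) ∧
    (∀ k x, x ≤ N → delSym k x ≤ delSym (k+1) x) ∧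
    (∀ j d y, y ≤ (j+d).choose j → y ≤ N → y ≤ delSym j y + delSym d y) := by
  intro N
  induction N using Nat.strong_induction_on with
  | _ N IH =>
  have hE : ∀ j p x y, 1 ≤ j → x < p.choose j → y < p.choose j → p.choose j ≤ x + y →
      x + y ≤ N →
      (p-1).choose (j-1) + delSym j (x + y - p.choose j) ≤ delSym j x + delSym j y := by
    intro j p x y hj hx hy hC hN
    have hx1 : 1 ≤ x := by omega
    have hy1 : 1 ≤ y := by omega
    have hjp : j < p := by
      by_contra h
      push_neg at h
      have h1 : p.choose j ≤ 1 := by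
        rcases Nat.lt_or_ge p j with h2 | h2
        · rw [Nat.choose_eq_zero_of_lt h2]; omega
        · have : p = j := by omega
          rw [this, Nat.choose_self]
      omega
    have hpd : j + (p - j) = p := by omega
    have hpas : p.choose j = (p-1).choose (j-1) + (p-1).choose j :=
      pascal p j (by omega) hj
    have dualx := delSym_dual (p-j) j x (by omega) (Or.inl hj) (by rw [hpd]; omega)
    rw [hpd] at dualx
    have dualy := delSym_dual (p-j) j y (by omega) (Or.inl hj) (by rw [hpd]; omega)
    rw [hpd] at dualy
    by_cases hz : x + y = p.choose j
    · have hz0 : x + y - p.choose j = 0 := by omega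
      rw [hz0, delSym_zero]
      have hxy : p.choose j - x = y := by omega
      rw [hxy] at dualx
      have hF' := (IH y (by omega)).2.2.2.2 j (p-j) y (by rw [hpd]; omega) le_rfl
      omega
    · have hz1 : 1 ≤ x + y - p.choose j := by omega
      have dualz := delSym_dual (p-j) j (x + y - p.choose j) (by omega) (Or.inl hj)
        (by rw [hpd]; omega)
      rw [hpd] at dualz
      have hsum : (p.choose j - x) + (p.choose j - y) = p.choose j - (x + y - p.choose j) := by
        omega
      have hM : (p.choose j - x) + (p.choose j - y) < N := by omega
      have hS' := (IH _ hM).2.1 (p-j) (p.choose j - x) (p.choose j - y) le_rfl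
      rw [hsum] at hS'
      omega
  have hS : ∀ j x y, x + y ≤ N → delSym j (x + y) ≤ delSym j x + delSym j y := by
    intro j x y hN
    rcases Nat.eq_zero_or_pos x with hx0 | hx1
    · subst hx0; simp
    rcases Nat.eq_zero_or_pos y with hy0 | hy1
    · subst hy0; simp
    rcases Nat.eq_zero_or_pos j with hj0 | hj1
    · subst hj0
      rw [delSym_zero_left (x+y) (by omega), delSym_zero_left x (by omega),
          delSym_zero_left y (by omega)]
      omega
    set m := cascadeTop j (x + y) with hm
    have hmk : j ≤ m := ct_ge j (x+y) hj1 (by omega)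
    have hup : m.choose j ≤ x + y := ct_upper j (x+y) hj1
    have hlt : x + y < (m+1).choose j := ct_lt j (x+y) hj1
    have hCpos : 1 ≤ m.choose j := Nat.choose_pos hmk
    have hrecs := delSym_rec j m (x+y) hj1 hmk hup hlt
    have key : ∀ a b : ℕ, a + b = x + y → m.choose j ≤ a →
        delSym j (x + y) ≤ delSym j a + delSym j b := by
      intro a b hab ha
      have hreca := delSym_rec j m a hj1 hmk ha (by omega)
      have harg : x + y - m.choose j = (a - m.choose j) + b := by omega
      rw [harg] at hrecs
      have hsub := (IH ((a - m.choose j) + b) (by omega)).2.1 (j-1) (a - m.choose j) b le_rfl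
      have hDb := (IH (N-1) (by omega)).2.2.2.1 (j-1) b (by omega)
      have hJ : j - 1 + 1 = j := by omega
      rw [hJ] at hDb
      omega
    rcases le_or_gt (m.choose j) x with hx | hx
    · exact key x y rfl hx
    rcases le_or_gt (m.choose j) y with hy | hy
    · have h := key y x (by omega) hy
      omega
    · have hEi := hE j m x y hj1 hx hy hup hN
      have hDz := (IH (N-1) (by omega)).2.2.2.1 (j-1) (x + y - m.choose j) (by omega)
      have hJ : j - 1 + 1 = j := by omega
      rw [hJ] at hDz
      omega
  have hV : ∀ k t, 1 ≤ k → t.choose (k+1) ≤ N → delSym k (t.choose (k+1)) ≤ (t-1).choose k := by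
    intro k t hk
    induction t with
    | zero =>
        intro _
        rw [Nat.choose_eq_zero_of_lt (by omega), delSym_zero]
        omega
    | succ t iht =>
        intro hN2
        rcases Nat.lt_or_ge t k with htk | htk
        · rw [Nat.choose_eq_zero_of_lt (by omega), delSym_zero]
          omega
        · have hpas : (t+1).choose (k+1) = t.choose k + t.choose (k+1) :=
            Nat.choose_succ_succ t k
          rw [hpas]
          have hS' := hS k (t.choose k) (t.choose (k+1)) (by omega)
          have hP := delSym_P k t hk htk
          have hiht := iht (by
            have := Nat.choose_le_choose (k+1) (show t ≤ t + 1 by omega)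
            omega)
          have hpas2 : t.choose k = (t-1).choose (k-1) + (t-1).choose k :=
            pascal t k (by omega) hk
          have hsimp : (t + 1 - 1).choose k = t.choose k := by simp
          omega
  have hD : ∀ k x, x ≤ N → delSym k x ≤ delSym (k+1) x := by
    intro k x hxN
    rcases Nat.eq_zero_or_pos x with hx0 | hx1
    · subst hx0; simp [delSym_zero]
    rcases Nat.eq_zero_or_pos k with hk0 | hk1
    · subst hk0
      rw [delSym_zero_left x (by omega), delSym_level_one x (by omega)]
    set t := cascadeTop (k+1) x with ht
    have hmk : k + 1 ≤ t := ct_ge (k+1) x (by omega) hx1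
    have hup : t.choose (k+1) ≤ x := ct_upper (k+1) x (by omega)
    have hlt : x < (t+1).choose (k+1) := ct_lt (k+1) x (by omega)
    have hrec := delSym_rec (k+1) t x (by omega) hmk hup hlt
    simp only [Nat.add_sub_cancel] at hrec
    have hx2 : (x - t.choose (k+1)) + t.choose (k+1) = x := by omega
    have hS' := hS k (x - t.choose (k+1)) (t.choose (k+1)) (by omega)
    rw [hx2] at hS'
    have hV' := hV k t hk1 (by omega)
    omega
  have hF : ∀ j d y, y ≤ (j+d).choose j → y ≤ N → y ≤ delSym j y + delSym d y := by
    have main : ∀ q j d y, j + d ≤ q → y ≤ (j+d).choose j → y ≤ N →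
        y ≤ delSym j y + delSym d y := by
      intro q
      induction q with
      | zero =>
          intro j d y hq hyb _
          have hj0 : j = 0 := by omega
          have hd0 : d = 0 := by omega
          subst hj0; subst hd0
          simp only [Nat.choose_self] at hyb
          interval_cases y
          · simp [delSym_zero]
          · simp [delSym_one]
      | succ q ihq =>
          intro j d y hq hyb hyN
          rcases Nat.eq_zero_or_pos y with hy0 | hy1
          · subst hy0; simp [delSym_zero]
          rcases Nat.eq_zero_or_pos j with hj0 | hj1
          · subst hj0
            simp only [Nat.choose_zero_right] at hyb
            have hy1' : y = 1 := by omega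
            subst hy1'
            rw [delSym_zero_left 1 (by omega), delSym_one]
            omega
          rcases Nat.eq_zero_or_pos d with hd0 | hd1
          · subst hd0
            have hyb' : y = 1 := by
              have : (j+0).choose j = 1 := by simp
              omega
            subst hyb'
            rw [delSym_zero_left 1 (by omega), delSym_one]
            omega
          -- j = 1 special
          by_cases hj1' : j = 1
          · subst hj1'
            rw [delSym_level_one y (by omega)]
            have hyb2 : y ≤ d + 1 := by
              have h1 : (1+d).choose 1 = 1 + d := Nat.choose_one_right _
              omega
            rcases Nat.lt_or_ge y (d+1) with hyd | hyd
            · rw [delSym_eq_self d y (by omega)]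
              omega
            · have hy : y = d + 1 := by omega
              subst hy
              have := delSym_succ_self d hd1
              omega
          -- d = 1 special
          by_cases hd1' : d = 1
          · subst hd1'
            rw [delSym_level_one y (by omega)]
            have hyb2 : y ≤ j + 1 := by
              have h1 : (j+1).choose j = j + 1 := Nat.choose_succ_self_right _
              omega
            rcases Nat.lt_or_ge y (j+1) with hyd | hyd
            · rw [delSym_eq_self j y (by omega)]
              omega
            · have hy : y = j + 1 := by omega
              subst hy
              have := delSym_succ_self j hj1
              omega
          -- now j ≥ 2, d ≥ 2
          have hj2 : 2 ≤ j := by omega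
          have hd2 : 2 ≤ d := by omega
          have hpsum : j + d = j + d := rfl
          by_cases hc1 : y ≤ (j+d-1).choose j
          · have hih := ihq j (d-1) y (by omega) (by
              have h : j + (d-1) = j + d - 1 := by omega
              rw [h]
              exact hc1) hyN
            have hDy := hD (d-1) y hyN
            have hJ : d - 1 + 1 = d := by omega
            rw [hJ] at hDy
            omega
          by_cases hc2 : y ≤ (j+d-1).choose (j-1)
          · have hih := ihq (j-1) d y (by omega) (by
              have h : (j-1) + d = j + d - 1 := by omega
              rw [h]
              exact hc2) hyN
            have hDy := hD (j-1) y hyN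
            have hJ : j - 1 + 1 = j := by omega
            rw [hJ] at hDy
            omega
          push_neg at hc1 hc2
          have hpas : (j+d).choose j = (j+d-1).choose (j-1) + (j+d-1).choose j :=
            pascal (j+d) j (by omega) (by omega)
          have hpas2 : (j+d-1).choose (j-1) = (j+d-1-1).choose (j-1-1) + (j+d-1-1).choose (j-1) :=
            pascal (j+d-1) (j-1) (by omega) (by omega)
          -- decompose at level j
          have hRyj := delSym_rec_closed j (j+d-1) y hj2 (by omega) (by omega) (by
            have h : j + d - 1 + 1 = j + d := by omega
            rw [h]
            exact hyb)
          -- decompose at level d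
          have hsymm1 : (j+d-1).choose d = (j+d-1).choose (j-1) :=
            choose_symm' _ _ _ (by omega)
          have hsymm2 : (j+d).choose d = (j+d).choose j :=
            choose_symm' _ _ _ (by omega)
          have hRyd := delSym_rec_closed d (j+d-1) y hd2 (by omega) (by omega) (by
            have h : j + d - 1 + 1 = j + d := by omega
            rw [h, hsymm2]
            exact hyb)
          -- IH on y₁
          have hy1b : y - (j+d-1).choose j ≤ (j+d-1).choose (j-1) := by omega
          have hih := ihq (j-1) d (y - (j+d-1).choose j) (by omega) (by
            have h : (j-1) + d = j + d - 1 := by omega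
            rw [h]
            exact hy1b) (by omega)
          -- dual₁ : level d on y₁
          have dual1 := delSym_dual (j-1) d (y - (j+d-1).choose j) (by omega)
            (Or.inl (by omega)) (by
              have h : d + (j-1) = j + d - 1 := by omega
              rw [h, hsymm1]
              exact hy1b)
          have hQ1 : d + (j-1) = j + d - 1 := by omega
          rw [hQ1] at dual1
          have hw1 : (j+d-1).choose d - (y - (j+d-1).choose j) = (j+d).choose j - y := by
            omega
          rw [hw1] at dual1
          -- dual₂ : level d-1 on y₂
          have dual2 := delSym_dual j (d-1) (y - (j+d-1).choose d) (by omega)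
            (Or.inl (by omega)) (by
              have h : (d-1) + j = j + d - 1 := by omega
              rw [h]
              have hsymm3 : (j+d-1).choose (d-1) = (j+d-1).choose j :=
                choose_symm' _ _ _ (by omega)
              rw [hsymm3]
              omega)
          have hQ2 : (d-1) + j = j + d - 1 := by omega
          rw [hQ2] at dual2
          have hw2 : (j+d-1).choose (d-1) - (y - (j+d-1).choose d) = (j+d).choose j - y := by
            have hsymm3 : (j+d-1).choose (d-1) = (j+d-1).choose j :=
              choose_symm' _ _ _ (by omega)
            omega
          rw [hw2] at dual2
          -- D at w̄
          have hDw := hD (j-1) ((j+d).choose j - y) (by omega)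
          have hJ : j - 1 + 1 = j := by omega
          rw [hJ] at hDw
          -- symm for constant in dual1
          have hsymm4 : (j+d-1-1).choose d = (j+d-1-1).choose (j-1-1) :=
            choose_symm' _ _ _ (by omega)
          omega
    intro j d y hyb hyN
    exact main (j + d) j d y le_rfl hyb hyN
  exact ⟨hE, hS, hV, hD, hF⟩
lemma delSym_subadd (j x y : ℕ) : delSym j (x + y) ≤ delSym j x + delSym j y :=
  (master (x+y)).2.1 j x y le_rfl

lemma delSym_mono_k (k x : ℕ) : delSym k x ≤ delSym (k+1) x :=
  (master x).2.2.2.1 k x le_rfl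

lemma delSym_L2 : ∀ k a b : ℕ, 1 ≤ k →
    delSym k (a + b) ≤ max b (delSym k a + delSym (k-1) b) := by
  intro k
  induction k with
  | zero => intro a b h; omega
  | succ K ihK =>
    intro a b _
    simp only [Nat.add_sub_cancel]
    rcases Nat.eq_zero_or_pos K with hK0 | hK1
    · subst hK0
      rcases Nat.eq_zero_or_pos (a+b) with hs0 | hs1
      · have h0 : a = 0 ∧ b = 0 := by omega
        rw [h0.1, h0.2]
        simp [delSym_zero]
      · rw [delSym_level_one (a+b) hs1]
        rcases Nat.eq_zero_or_pos b with hb0 | hb1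
        · subst hb0
          rw [delSym_zero, delSym_level_one a (by omega)]
          apply le_max_of_le_right
          omega
        · have h0 : delSym 0 b = 1 := delSym_zero_left b hb1
          apply le_max_of_le_right
          omega
    rcases Nat.eq_zero_or_pos (a+b) with hs0 | hs1
    · have h0 : a = 0 ∧ b = 0 := by omega
      rw [h0.1, h0.2]
      simp [delSym_zero]
    obtain ⟨m, hmk, hup, hlt⟩ : ∃ m, K+1 ≤ m ∧ m.choose (K+1) ≤ a + b ∧
        a + b < (m+1).choose (K+1) :=
      ⟨cascadeTop (K+1) (a+b), ct_ge _ _ (by omega) hs1, ct_upper _ _ (by omega),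
        ct_lt _ _ (by omega)⟩
    have hrecs := delSym_rec (K+1) m (a+b) (by omega) hmk hup hlt
    simp only [Nat.add_sub_cancel] at hrecs
    have hpas : m.choose (K+1) = (m-1).choose K + (m-1).choose (K+1) := by
      have h := pascal m (K+1) (by omega) (by omega)
      simpa using h
    have hpas_up : (m+1).choose (K+1) = m.choose K + m.choose (K+1) := by
      have h := pascal (m+1) (K+1) (by omega) (by omega)
      simpa using h
    rcases le_or_gt (m.choose (K+1)) a with hc1 | hc1
    · -- case a ≥ C(m,K+1)
      have hreca := delSym_rec (K+1) m a (by omega) hmk hc1 (by omega)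
      simp only [Nat.add_sub_cancel] at hreca
      have hS' := delSym_subadd K (a - m.choose (K+1)) b
      have harg : a + b - m.choose (K+1) = (a - m.choose (K+1)) + b := by omega
      rw [harg] at hrecs
      apply le_max_of_le_right
      omega
    rcases le_or_gt a ((m-1).choose (K+1)) with hc2 | hc2
    · -- case a ≤ C(m-1,K+1) : LHS ≤ b
      have hI := delSym_le_self (a + b - m.choose (K+1)) K
      apply le_max_of_le_left
      omega
    · -- case C(m-1,K+1) < a < C(m,K+1)
      have hm2 : K + 2 ≤ m := by
        by_contra h
        push_neg at h
        have hmeq : m = K + 1 := by omega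
        rw [hmeq, Nat.choose_self] at hc1
        omega
      have hreca := delSym_rec (K+1) (m-1) a (by omega) (by omega) (by omega)
        (by rw [show m-1+1 = m by omega]; omega)
      simp only [Nat.add_sub_cancel] at hreca
      rcases le_or_gt (m.choose K) b with hc3a | hc3a
      · -- b ≥ C(m,K): LHS ≤ b
        have hmono := delSym_mono K (a + b - m.choose (K+1)) (m.choose K) (by omega)
        have hP := delSym_P K m hK1 (by omega)
        have hpasK : m.choose K = (m-1).choose (K-1) + (m-1).choose K :=
          pascal m K (by omega) (by omega)
        apply le_max_of_le_left
        omega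
      rcases le_or_gt ((m-1).choose K) b with hc3b | hc3b
      · -- C(m-1,K) ≤ b < C(m,K)
        have hrecb := delSym_rec K (m-1) b hK1 (by omega) hc3b
          (by rw [show m-1+1 = m by omega]; omega)
        have hIH := ihK (a - (m-1).choose (K+1)) (b - (m-1).choose K) hK1
        have harg2 : a + b - m.choose (K+1)
            = (a - (m-1).choose (K+1)) + (b - (m-1).choose K) := by omega
        rw [harg2] at hrecs
        have hpas3 : (m-1).choose K = (m-1-1).choose (K-1) + (m-1-1).choose K :=
          pascal (m-1) K (by omega) (by omega)
        rcases le_max_iff.mp hIH with h | h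
        · apply le_max_of_le_left
          omega
        · apply le_max_of_le_right
          omega
      · -- b < C(m-1,K): use E
        have hE' := (master ((a - (m-1).choose (K+1)) + b)).1 K (m-1)
          (a - (m-1).choose (K+1)) b hK1 (by omega) (by omega) (by omega) le_rfl
        have harg3 : (a - (m-1).choose (K+1)) + b - (m-1).choose K
            = a + b - m.choose (K+1) := by omega
        rw [harg3] at hE'
        have hpas3 : (m-1).choose K = (m-1-1).choose (K-1) + (m-1-1).choose K :=
          pascal (m-1) K (by omega) (by omega)
        apply le_max_of_le_right
        omega


/-- Lemma 3.2 of Björner–Vrećica: for k > 0 and r < k,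
∂^k(n_0 + ... + n_r) ≤ Σ_{i=0}^{r} max {n_{i+1}, ∂^{k-i}(n_i)}. -/
theorem delSym_subadditive (k r : ℕ) (hk : 0 < k) (hr : r < k) (n : ℕ → ℕ) :
    delSym k (∑ i ∈ Finset.range (r + 1), n i) ≤
      ∑ i ∈ Finset.range (r + 1), max (n (i + 1)) (delSym (k - i) (n i)) := by
  induction r generalizing k n with
  | zero =>
      simp only [show (0:ℕ)+1 = 1 from rfl, Finset.sum_range_one, Nat.sub_zero]
      exact le_max_right _ _
  | succ r ihr =>
      rw [Finset.sum_range_succ' n (r+1),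
          add_comm (∑ i ∈ Finset.range (r+1), n (i+1)) (n 0)]
      rw [Finset.sum_range_succ' (fun i => max (n (i+1)) (delSym (k-i) (n i))) (r+1)]
      have hL2 := delSym_L2 k (n 0) (∑ i ∈ Finset.range (r+1), n (i+1)) (by omega)
      have hIH := ihr (k-1) (by omega) (by omega) (fun i => n (i+1))
      have hC : max (n (0+1)) (delSym (k-0) (n 0)) = max (n 1) (delSym k (n 0)) := rfl
      have hcongr : ∑ i ∈ Finset.range (r+1), max (n (i+1+1)) (delSym (k-1-i) (n (i+1)))
          = ∑ i ∈ Finset.range (r+1), max (n (i+1+1)) (delSym (k-(i+1)) (n (i+1))) := by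
        apply Finset.sum_congr rfl
        intro i _
        have h : k - 1 - i = k - (i+1) := by omega
        rw [h]
      rw [hcongr] at hIH
      rcases le_max_iff.mp hL2 with hcase | hcase
      · have hT := Finset.sum_range_succ' (fun i => n (i+1)) r
        simp only [Nat.zero_add] at hT
        have hbound : ∑ i ∈ Finset.range r, n (i+1+1)
            ≤ ∑ i ∈ Finset.range (r+1), max (n (i+1+1)) (delSym (k-(i+1)) (n (i+1))) := by
          calc ∑ i ∈ Finset.range r, n (i+1+1)
              ≤ ∑ i ∈ Finset.range (r+1), n (i+1+1) := by
                apply Finset.sum_le_sum_of_subset (Finset.range_subset_range.mpr (by omega))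
            _ ≤ _ := Finset.sum_le_sum (fun i _ => le_max_left _ _)
        have hM : n 1 ≤ max (n 1) (delSym k (n 0)) := le_max_left _ _
        omega
      · have hM : delSym k (n 0) ≤ max (n 1) (delSym k (n 0)) := le_max_right _ _
        omega
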